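/- Fix a prime p and a group G. Assume G has a Sylow p-subgroup S that is a discrete p-toral group. Then any p-subgroup P ≤ G with the property that every finite p-subgroup of G is conjugate in G to a subgroup of P is itself a Sylow p-subgroup of G, i.e., every p-subgroup of G is conjugate in G to a subgroup of P. -/

import Mathlib

set_option linter.unnecessarySimpa false

/-- The image of the `p`-adic integers in `ℚ_[p]`, as an additive subgroup. -/
noncomputable def padicIntAddSubgroup (p : ℕ) [Fact p.Prime] : AddSubgroup ℚ_[p] :=
  (PadicInt.Coe.ringHom (p := p)).toAddMonoidHom.range

/-- The Prüfer `p`-group `ℤ(p^∞)`, realized as `ℚ_[p] ⧸ ℤ_[p]`. -/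
abbrev ZpInfty (p : ℕ) [Fact p.Prime] : Type :=
  ℚ_[p] ⧸ padicIntAddSubgroup p

/-- The discrete `p`-torus of rank `r`. -/
abbrev DiscretePTorus (p : ℕ) [Fact p.Prime] (r : ℕ) : Type :=
  Fin r → ZpInfty p

/-- A group `S` is discrete `p`-toral if it has a normal subgroup of finite `p`-power
index that is isomorphic to a discrete `p`-torus. -/
def IsDiscretePToral (p : ℕ) [Fact p.Prime] (S : Type*) [Group S] : Prop :=
  ∃ T : Subgroup S, T.Normal ∧ (∃ n : ℕ, T.index = p ^ n) ∧
    ∃ r : ℕ, Nonempty (T ≃* Multiplicative (DiscretePTorus p r))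

-- finiteness of p^k-torsion
lemma zpinfty_torsion_finite (p : ℕ) [Fact p.Prime] (k : ℕ) :
    {z : ZpInfty p | (p ^ k : ℕ) • z = 0}.Finite := by
  have hp : (p : ℚ_[p]) ^ k ≠ 0 := by
    apply pow_ne_zero
    exact_mod_cast (Nat.cast_ne_zero (R := ℚ_[p])).2 (Fact.out (p := p.Prime)).ne_zero
  apply Set.Finite.subset (Set.Finite.image
    (f := fun n : ℕ => (QuotientAddGroup.mk ((n : ℚ_[p]) / (p : ℚ_[p]) ^ k) : ZpInfty p))
    (Set.finite_Iio (p ^ k)))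
  rintro z hz
  obtain ⟨q, rfl⟩ := QuotientAddGroup.mk_surjective z
  have h1 : (QuotientAddGroup.mk ((p ^ k : ℕ) • q) : ZpInfty p) = 0 := by
    have : ((p ^ k : ℕ) • (QuotientAddGroup.mk q : ZpInfty p)) = 0 := hz
    rw [← this]
    exact map_nsmul (QuotientAddGroup.mk' (padicIntAddSubgroup p)) (p ^ k) q
  rw [QuotientAddGroup.eq_zero_iff] at h1
  obtain ⟨w, hw⟩ := h1
  -- hw : Coe.ringHom w = (p^k : ℕ) • q
  have hw' : (w : ℚ_[p]) = (p : ℚ_[p]) ^ k * q := by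
    have : ((p ^ k : ℕ) : ℚ_[p]) * q = (p : ℚ_[p]) ^ k * q := by push_cast; ring
    rw [← this, ← nsmul_eq_mul]; exact hw
  refine ⟨w.appr k, PadicInt.appr_lt w k, ?_⟩
  have hspec := PadicInt.appr_spec k w
  rw [Ideal.mem_span_singleton] at hspec
  obtain ⟨c, hc⟩ := hspec
  -- w - appr = p^k * c
  apply (QuotientAddGroup.eq_iff_sub_mem ..).2
  refine ⟨-c, ?_⟩
  have hcQ : ((w : ℚ_[p]) - (w.appr k : ℚ_[p])) = (p : ℚ_[p]) ^ k * (c : ℚ_[p]) := by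
    have := congrArg (fun x : ℤ_[p] => (x : ℚ_[p])) hc
    push_cast at this ⊢
    simpa using this
  show ((-c : ℤ_[p]) : ℚ_[p]) = (w.appr k : ℚ_[p]) / (p : ℚ_[p]) ^ k - q
  rw [hw'] at hcQ
  push_cast
  rw [eq_sub_iff_add_eq, eq_div_iff hp]
  linear_combination hcQ

lemma zpinfty_div (p : ℕ) [Fact p.Prime] (z : ZpInfty p) : ∃ y : ZpInfty p, p • y = z := by
  obtain ⟨q, rfl⟩ := QuotientAddGroup.mk_surjective z
  have hp : (p : ℚ_[p]) ≠ 0 :=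
    (Nat.cast_ne_zero (R := ℚ_[p])).2 (Fact.out (p := p.Prime)).ne_zero
  refine ⟨QuotientAddGroup.mk (q / p), ?_⟩
  have : (p • (QuotientAddGroup.mk (q / p) : ZpInfty p)) = QuotientAddGroup.mk (p • (q / p)) :=
    (map_nsmul (QuotientAddGroup.mk' (padicIntAddSubgroup p)) p (q / p)).symm
  rw [this]
  congr 1
  rw [nsmul_eq_mul, mul_div_cancel₀ _ hp]

lemma torus_torsion_finite (p : ℕ) [Fact p.Prime] (r k : ℕ) :
    {x : DiscretePTorus p r | (p ^ k : ℕ) • x = 0}.Finite := by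
  apply Set.Finite.subset (Set.Finite.pi (fun i : Fin r => zpinfty_torsion_finite p k))
  intro x hx i _
  exact congrFun hx i

lemma torus_div (p : ℕ) [Fact p.Prime] (r : ℕ) (x : DiscretePTorus p r) :
    ∃ y : DiscretePTorus p r, p • y = x := by
  refine ⟨fun i => Classical.choose (zpinfty_div p (x i)), ?_⟩
  funext i
  exact Classical.choose_spec (zpinfty_div p (x i))

-- multiplicative versions
lemma mtorus_torsion_finite (p : ℕ) [Fact p.Prime] (r k : ℕ) :
    {x : Multiplicative (DiscretePTorus p r) | x ^ (p ^ k) = 1}.Finite := by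
  have : {x : Multiplicative (DiscretePTorus p r) | x ^ (p ^ k) = 1}
      = Multiplicative.toAdd ⁻¹' {x : DiscretePTorus p r | (p ^ k : ℕ) • x = 0} := by
    ext x; rfl
  rw [this]
  exact Set.Finite.preimage (Equiv.injective _ |>.injOn) (torus_torsion_finite p r k)

lemma mtorus_div (p : ℕ) [Fact p.Prime] (r : ℕ) (x : Multiplicative (DiscretePTorus p r)) :
    ∃ y, y ^ p = x := by
  obtain ⟨y, hy⟩ := torus_div p r (Multiplicative.toAdd x)
  exact ⟨Multiplicative.ofAdd y, by
    rw [← ofAdd_nsmul, hy]; rfl⟩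

section Key

variable {G : Type*} [Group G]

private lemma conjpow (g x : G) (n : ℕ) : (g * x * g⁻¹) ^ n = g * x ^ n * g⁻¹ := by
  simpa [MulAut.conj_apply] using (map_pow (MulAut.conj g) x n).symm

private def mulSub (H K : Subgroup G)
    (hnorm : ∀ h ∈ H, ∀ k ∈ K, h * k * h⁻¹ ∈ K) : Subgroup G where
  carrier := {x | ∃ h ∈ H, ∃ k ∈ K, x = h * k}
  one_mem' := ⟨1, one_mem H, 1, one_mem K, (one_mul 1).symm⟩
  mul_mem' := by
    rintro x y ⟨h1, hh1, k1, hk1, rfl⟩ ⟨h2, hh2, k2, hk2, rfl⟩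
    refine ⟨h1 * h2, mul_mem hh1 hh2, (h2⁻¹ * k1 * h2) * k2, mul_mem ?_ hk2, by group⟩
    simpa using hnorm h2⁻¹ (inv_mem hh2) k1 hk1
  inv_mem' := by
    rintro x ⟨h, hh, k, hk, rfl⟩
    exact ⟨h⁻¹, inv_mem hh, h * k⁻¹ * h⁻¹, hnorm h hh k⁻¹ (inv_mem hk), by group⟩

private lemma key_lemma (p a : ℕ) (S T P : Subgroup G)
    (hTS : T ≤ S) (hPS : P ≤ S)
    (hSord : ∀ x ∈ S, ∃ k : ℕ, x ^ p ^ k = 1)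
    (hTnorm : ∀ s ∈ S, ∀ t ∈ T, s * t * s⁻¹ ∈ T)
    (hpow : ∀ s ∈ S, s ^ p ^ a ∈ T)
    (hTcomm : ∀ t ∈ T, ∀ u ∈ T, t * u = u * t)
    (hTfin : ∀ k : ℕ, {t : G | t ∈ T ∧ t ^ p ^ k = 1}.Finite)
    (hTdiv : ∀ t ∈ T, ∃ u ∈ T, u ^ p = t)
    (hH : ∃ H : Subgroup G, H ≤ S ∧ Finite H ∧ ∀ s ∈ S, ∃ x ∈ H, x⁻¹ * s ∈ T)
    (hPfin' : ∀ Q : Subgroup G, IsPGroup p Q → Finite Q →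
      ∃ g : G, ∀ x ∈ Q, g * x * g⁻¹ ∈ P) :
    S ≤ P := by
  classical
  -- torsion-level subgroups of T
  let TL : ℕ → Subgroup G := fun k =>
    { carrier := {t : G | t ∈ T ∧ t ^ p ^ k = 1}
      one_mem' := ⟨one_mem T, one_pow _⟩
      mul_mem' := by
        rintro x y ⟨hx1, hx2⟩ ⟨hy1, hy2⟩
        refine ⟨mul_mem hx1 hy1, ?_⟩
        rw [Commute.mul_pow (hTcomm x hx1 y hy1), hx2, hy2, one_mul]
      inv_mem' := by
        rintro x ⟨hx1, hx2⟩
        exact ⟨inv_mem hx1, by rw [inv_pow, hx2, inv_one]⟩ }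
  have hTLmem : ∀ k x, x ∈ TL k ↔ x ∈ T ∧ x ^ p ^ k = 1 := fun _ _ => Iff.rfl
  have hTLT : ∀ k, ∀ x ∈ TL k, x ∈ T := fun k x hx => hx.1
  have hTLmono : ∀ {k k' : ℕ}, k ≤ k' → ∀ x, x ∈ TL k → x ∈ TL k' := by
    intro k k' hkk x hx
    obtain ⟨d, rfl⟩ := Nat.exists_eq_add_of_le hkk
    refine ⟨hx.1, ?_⟩
    rw [pow_add, pow_mul, hx.2, one_pow]
  have hTLfin : ∀ k, Finite (TL k) := fun k => (hTfin k).to_subtype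
  -- iterated divisibility
  have hdiv' : ∀ (b : ℕ), ∀ t ∈ T, ∃ u ∈ T, u ^ p ^ b = t := by
    intro b
    induction b with
    | zero => exact fun t ht => ⟨t, ht, by rw [pow_zero, pow_one]⟩
    | succ b ih =>
      intro t ht
      obtain ⟨u, hu, hub⟩ := ih t ht
      obtain ⟨v, hv, hvp⟩ := hTdiv u hu
      refine ⟨v, hv, ?_⟩
      rw [pow_succ', pow_mul, hvp, hub]
  -- conjugation control on torsion levels
  have hconjTL : ∀ (g : G) (m : ℕ), (∀ x ∈ TL m, g * x * g⁻¹ ∈ S) →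
      ∀ k, k + a ≤ m →
      (∀ x ∈ TL k, g * x * g⁻¹ ∈ TL k) ∧ (∀ x ∈ TL k, g⁻¹ * x * g ∈ TL k) := by
    intro g m hgS k hk
    have fwd : ∀ x ∈ TL k, g * x * g⁻¹ ∈ TL k := by
      intro t ht
      obtain ⟨u, hu, hua⟩ := hdiv' a t ht.1
      have hu' : u ∈ TL (k + a) := by
        refine ⟨hu, ?_⟩
        rw [add_comm k a, pow_add, pow_mul, hua, ht.2]
      have hgu : g * u * g⁻¹ ∈ S := hgS u (hTLmono hk u hu')
      have h1 : g * t * g⁻¹ = (g * u * g⁻¹) ^ p ^ a := by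
        rw [conjpow, hua]
      refine ⟨h1 ▸ hpow _ hgu, ?_⟩
      rw [conjpow, ht.2, mul_one, mul_inv_cancel]
    refine ⟨fwd, ?_⟩
    haveI := hTLfin k
    have hinj : Function.Injective (fun t : TL k => (⟨g * t * g⁻¹, fwd t t.2⟩ : TL k)) := by
      intro x y hxy
      have h2 : g * (x : G) * g⁻¹ = g * (y : G) * g⁻¹ := congrArg Subtype.val hxy
      ext
      exact mul_left_cancel (mul_right_cancel h2)
    have hsurj := Finite.injective_iff_surjective.mp hinj
    intro x hx
    obtain ⟨y, hy⟩ := hsurj ⟨x, hx⟩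
    have h3 : g * (y : G) * g⁻¹ = x := congrArg Subtype.val hy
    have h4 : g⁻¹ * x * g = y := by rw [← h3]; group
    rw [h4]; exact y.2
  -- T ≤ P
  have hTLP : ∀ k, ∀ x ∈ TL k, x ∈ P := by
    intro k
    haveI := hTLfin (k + a)
    have hpg : IsPGroup p (TL (k + a)) := by
      intro x
      exact ⟨k + a, Subtype.ext (by rw [SubmonoidClass.coe_pow, x.2.2, OneMemClass.coe_one])⟩
    obtain ⟨g, hg⟩ := hPfin' (TL (k + a)) hpg inferInstance
    have hgS : ∀ x ∈ TL (k + a), g * x * g⁻¹ ∈ S := fun x hx => hPS (hg x hx)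
    obtain ⟨fwd, bwd⟩ := hconjTL g (k + a) hgS k le_rfl
    intro x hx
    have h1 : g⁻¹ * x * g ∈ TL k := bwd x hx
    have h2 : g * (g⁻¹ * x * g) * g⁻¹ ∈ P :=
      hg _ (hTLmono (Nat.le_add_right k a) _ h1)
    have h3 : g * (g⁻¹ * x * g) * g⁻¹ = x := by group
    rwa [h3] at h2
  have hTP : ∀ t ∈ T, t ∈ P := by
    intro t ht
    obtain ⟨k, hk⟩ := hSord t (hTS ht)
    exact hTLP k t ⟨ht, hk⟩
  -- transversal subgroup
  obtain ⟨H, hHS, hHfin, htrans⟩ := hH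
  -- bound on H ∩ T
  have hM0 : ∃ M₀ : ℕ, ∀ x ∈ H, x ∈ T → x ∈ TL M₀ := by
    haveI := hHfin
    letI := Fintype.ofFinite H
    set f : H → ℕ := fun x => Classical.choose (hSord x (hHS x.2)) with hf
    refine ⟨Finset.univ.sup f, ?_⟩
    intro x hxH hxT
    have hfx : x ^ p ^ (f ⟨x, hxH⟩) = 1 :=
      Classical.choose_spec (hSord x (hHS hxH))
    exact hTLmono (Finset.le_sup (Finset.mem_univ (⟨x, hxH⟩ : H))) x ⟨hxT, hfx⟩
  obtain ⟨j, hM0⟩ := hM0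
  set m := j + a + a with hm
  have hTLnormS : ∀ k, ∀ s ∈ S, ∀ x ∈ TL k, s * x * s⁻¹ ∈ TL k := by
    intro k s hs x hx
    exact ⟨hTnorm s hs x hx.1, by rw [conjpow, hx.2, mul_one, mul_inv_cancel]⟩
  let F : Subgroup G := mulSub H (TL j) (fun h hh k hk => hTLnormS j h (hHS hh) k hk)
  let Fp : Subgroup G := mulSub H (TL m) (fun h hh k hk => hTLnormS m h (hHS hh) k hk)
  have hFmem : ∀ x, x ∈ F ↔ ∃ h ∈ H, ∃ k ∈ TL j, x = h * k := fun _ => Iff.rfl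
  have hFFp : ∀ x ∈ F, x ∈ Fp := by
    rintro x ⟨h, hh, k, hk, rfl⟩
    exact ⟨h, hh, k, hTLmono (by omega) k hk, rfl⟩
  have hFpS : ∀ x ∈ Fp, x ∈ S := by
    rintro x ⟨h, hh, k, hk, rfl⟩
    exact mul_mem (hHS hh) (hTS hk.1)
  have hHF : ∀ x ∈ H, x ∈ F := fun x hx => ⟨x, hx, 1, one_mem _, (mul_one x).symm⟩
  have hTLmF : ∀ x ∈ TL m, x ∈ Fp := fun x hx => ⟨1, one_mem _, x, hx, (one_mul x).symm⟩
  -- Fp is finite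
  haveI hFpfin : Finite Fp := by
    have h1 : (H : Set G).Finite := Set.toFinite _
    have h2 : ((Fp : Set G)).Finite := by
      apply Set.Finite.subset (Set.Finite.image2 (· * ·) h1 (hTfin m))
      rintro x ⟨h, hh, k, hk, rfl⟩
      exact Set.mem_image2_of_mem hh hk
    exact h2.to_subtype
  have hFpP : IsPGroup p Fp := by
    intro x
    obtain ⟨k, hk⟩ := hSord x (hFpS x x.2)
    exact ⟨k, Subtype.ext (by rw [SubmonoidClass.coe_pow, hk, OneMemClass.coe_one])⟩
  obtain ⟨g, hg⟩ := hPfin' Fp hFpP inferInstance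
  have hgS : ∀ x ∈ TL m, g * x * g⁻¹ ∈ S := fun x hx => hPS (hg x (hTLmF x hx))
  obtain ⟨fwdj, bwdj⟩ := hconjTL g m hgS j (by omega)
  obtain ⟨fwdja, bwdja⟩ := hconjTL g m hgS (j + a) (by omega)
  -- F ∩ T ⊆ TL j
  have hFT : ∀ x ∈ F, x ∈ T → x ∈ TL j := by
    rintro x ⟨h, hh, k, hk, rfl⟩ hT
    have hhT : h ∈ T := by
      have : (h * k) * k⁻¹ ∈ T := mul_mem hT (inv_mem hk.1)
      simpa using this
    exact mul_mem (hM0 h hh hhT) hk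
  -- the key rigidity property
  have hiii : ∀ x ∈ F, g * x * g⁻¹ ∈ T → x ∈ T := by
    intro x hxF hgT
    have hxS : x ∈ S := hFpS x (hFFp x hxF)
    have h1 : x ^ p ^ a ∈ TL j := hFT _ (pow_mem hxF (p ^ a)) (hpow x hxS)
    have h2 : x ^ p ^ (j + a) = 1 := by
      rw [add_comm j a, pow_add, pow_mul, h1.2]
    have h3 : g * x * g⁻¹ ∈ TL (j + a) := ⟨hgT, by rw [conjpow, h2, mul_one, mul_inv_cancel]⟩
    have h4 : g⁻¹ * (g * x * g⁻¹) * g ∈ TL (j + a) := bwdja _ h3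
    have h5 : g⁻¹ * (g * x * g⁻¹) * g = x := by group
    rw [h5] at h4
    exact h4.1
  -- counting argument via a finite quotient of H
  let sd : Setoid H := ⟨fun x y => (x : G)⁻¹ * y ∈ T, by
    constructor
    · intro x; simpa using one_mem T
    · intro x y hxy; simpa using inv_mem hxy
    · intro x y z h1 h2; simpa [mul_assoc] using mul_mem h1 h2⟩
  haveI : Finite (Quotient sd) := Finite.of_surjective (Quotient.mk sd) (fun q => Quotient.exists_rep q)
  have hHTconj : ∀ x : G, x ∈ H → x ∈ T → g * x * g⁻¹ ∈ T :=
    fun x hx ht => (fwdj x (hM0 x hx ht)).1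
  have hcex : ∀ h : H, ∃ x ∈ H, x⁻¹ * (g * h * g⁻¹) ∈ T :=
    fun h => htrans _ (hPS (hg h (hFFp _ (hHF h h.2))))
  let c : H → H := fun h => ⟨Classical.choose (hcex h), (Classical.choose_spec (hcex h)).1⟩
  have hcspec : ∀ h : H, ((c h : G))⁻¹ * (g * h * g⁻¹) ∈ T :=
    fun h => (Classical.choose_spec (hcex h)).2
  have hwd : ∀ h₁ h₂ : H, sd.r h₁ h₂ → sd.r (c h₁) (c h₂) := by
    intro h₁ h₂ hr
    have hmid : g * ((h₁ : G)⁻¹ * h₂) * g⁻¹ ∈ T :=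
      hHTconj _ (mul_mem (inv_mem h₁.2) h₂.2) hr
    show ((c h₁ : G))⁻¹ * (c h₂ : G) ∈ T
    have hid : ((c h₁ : G))⁻¹ * (c h₂ : G) =
        (((c h₁ : G))⁻¹ * (g * h₁ * g⁻¹)) * (g * ((h₁ : G)⁻¹ * h₂) * g⁻¹) *
          (((c h₂ : G))⁻¹ * (g * h₂ * g⁻¹))⁻¹ := by group
    rw [hid]
    exact mul_mem (mul_mem (hcspec h₁) hmid) (inv_mem (hcspec h₂))
  let cbar : Quotient sd → Quotient sd := Quotient.map c hwd
  have hcinj : Function.Injective cbar := by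
    intro q₁ q₂
    obtain ⟨h₁, rfl⟩ := Quotient.exists_rep q₁
    obtain ⟨h₂, rfl⟩ := Quotient.exists_rep q₂
    intro heq
    have heq' : sd.r (c h₁) (c h₂) := Quotient.exact heq
    have hmid : g * ((h₁ : G)⁻¹ * h₂) * g⁻¹ ∈ T := by
      have hid2 : g * ((h₁ : G)⁻¹ * h₂) * g⁻¹ =
          (((c h₁ : G))⁻¹ * (g * h₁ * g⁻¹))⁻¹ * (((c h₁ : G))⁻¹ * (c h₂ : G)) *
            (((c h₂ : G))⁻¹ * (g * h₂ * g⁻¹)) := by group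
      rw [hid2]
      exact mul_mem (mul_mem (inv_mem (hcspec h₁)) heq') (hcspec h₂)
    have hxT : (h₁ : G)⁻¹ * h₂ ∈ T :=
      hiii _ (hHF _ (mul_mem (inv_mem h₁.2) h₂.2)) hmid
    exact Quotient.sound hxT
  have hcsurj := Finite.injective_iff_surjective.mp hcinj
  intro s hs
  obtain ⟨x, hxH, hxs⟩ := htrans s hs
  obtain ⟨q, hq⟩ := hcsurj (Quotient.mk sd ⟨x, hxH⟩)
  obtain ⟨h, rfl⟩ := Quotient.exists_rep q
  have hrel : sd.r (c h) ⟨x, hxH⟩ := Quotient.exact hq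
  have hrel' : ((c h : G))⁻¹ * x ∈ T := hrel
  have hxP : x ∈ P := by
    have hgh : g * h * g⁻¹ ∈ P := hg h (hFFp _ (hHF h h.2))
    have hid3 : x = (g * h * g⁻¹) * (((c h : G))⁻¹ * (g * h * g⁻¹))⁻¹ *
        (((c h : G))⁻¹ * x) := by group
    rw [hid3]
    exact mul_mem (mul_mem hgh (hTP _ (inv_mem (hcspec h)))) (hTP _ hrel')
  have hsx : s = x * (x⁻¹ * s) := by group
  rw [hsx]
  exact mul_mem hxP (hTP _ hxs)

end Key

/-- Suppose `G` has a Sylow `p`-subgroup `S` (a `p`-subgroup into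
which every `p`-subgroup of `G` can be conjugated) that is discrete `p`-toral. Then
every `p`-subgroup `P ≤ G` containing every finite `p`-subgroup of `G` up to
conjugacy is itself a Sylow `p`-subgroup of `G`. -/
theorem sylow_of_contains_finite_pSubgroups
    (p : ℕ) [Fact p.Prime] {G : Type*} [Group G]
    (S : Subgroup G) (hSp : IsPGroup p S) (hStoral : IsDiscretePToral p S)
    (hSsyl : ∀ Q : Subgroup G, IsPGroup p Q →
      ∃ g : G, Subgroup.map (MulAut.conj g).toMonoidHom Q ≤ S)
    (P : Subgroup G) (hPp : IsPGroup p P)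
    (hPfin : ∀ Q : Subgroup G, IsPGroup p Q → Finite Q →
      ∃ g : G, Subgroup.map (MulAut.conj g).toMonoidHom Q ≤ P) :
    ∀ Q : Subgroup G, IsPGroup p Q →
      ∃ g : G, Subgroup.map (MulAut.conj g).toMonoidHom Q ≤ P := by
  classical
  obtain ⟨T₀, hT₀norm, ⟨n, hidx⟩, r, ⟨e⟩⟩ := hStoral
  haveI := hT₀norm
  have hp : p.Prime := Fact.out
  haveI hT₀fi : T₀.FiniteIndex := ⟨by rw [hidx]; exact pow_ne_zero n hp.ne_zero⟩
  -- helper for conjugation statements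
  have hconj_le : ∀ (g : G) (Q X : Subgroup G),
      Subgroup.map (MulAut.conj g).toMonoidHom Q ≤ X ↔ ∀ x ∈ Q, g * x * g⁻¹ ∈ X := by
    intro g Q X
    rw [Subgroup.map_le_iff_le_comap]
    constructor
    · intro hle x hx
      simpa [Subgroup.mem_comap, MulAut.conj_apply] using hle hx
    · intro hle x hx
      simp only [Subgroup.mem_comap, MulEquiv.coe_toMonoidHom, MulAut.conj_apply]
      exact hle x hx
  -- conjugate P into S
  obtain ⟨k, hk⟩ := hSsyl P hPp
  set P' := Subgroup.map (MulAut.conj k).toMonoidHom P with hP'def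
  have hP'S : P' ≤ S := hk
  have hP'fin : ∀ Q : Subgroup G, IsPGroup p Q → Finite Q →
      ∃ g : G, ∀ x ∈ Q, g * x * g⁻¹ ∈ P' := by
    intro Q hQ hQf
    obtain ⟨g, hg⟩ := hPfin Q hQ hQf
    refine ⟨k * g, fun x hx => ?_⟩
    have h1 : g * x * g⁻¹ ∈ P := (hconj_le g Q P).mp hg x hx
    have h2 : k * (g * x * g⁻¹) * k⁻¹ ∈ P' :=
      Subgroup.mem_map.mpr ⟨g * x * g⁻¹, h1, by simp [MulAut.conj_apply]⟩
    have heq : (k * g) * x * (k * g)⁻¹ = k * (g * x * g⁻¹) * k⁻¹ := by group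
    rwa [heq]
  -- the torus as a subgroup of G
  set T : Subgroup G := T₀.map S.subtype with hTdef
  have hTS : T ≤ S := Subgroup.map_subtype_le T₀
  have hTmem : ∀ x : G, x ∈ T ↔ ∃ h : x ∈ S, (⟨x, h⟩ : S) ∈ T₀ := by
    intro x
    constructor
    · rintro ⟨y, hy, rfl⟩
      exact ⟨y.2, by simpa using hy⟩
    · rintro ⟨h, h2⟩
      exact ⟨⟨x, h⟩, h2, rfl⟩
  have hSord : ∀ x ∈ S, ∃ c : ℕ, x ^ p ^ c = 1 := by
    intro x hx
    obtain ⟨c, hc⟩ := hSp ⟨x, hx⟩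
    exact ⟨c, by simpa using congrArg Subtype.val hc⟩
  have hTnorm : ∀ s ∈ S, ∀ t ∈ T, s * t * s⁻¹ ∈ T := by
    intro s hs t ht
    obtain ⟨t₀, ht₀, rfl⟩ := ht
    refine ⟨⟨s, hs⟩ * t₀ * ⟨s, hs⟩⁻¹, hT₀norm.conj_mem t₀ ht₀ ⟨s, hs⟩, by simp⟩
  have hpow : ∀ s ∈ S, s ^ p ^ n ∈ T := by
    intro s hs
    have h1 : (⟨s, hs⟩ : S) ^ p ^ n ∈ T₀ := by
      rw [← hidx]; exact T₀.pow_index_mem _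
    exact ⟨_, h1, by simp⟩
  have hTcomm : ∀ t ∈ T, ∀ u ∈ T, t * u = u * t := by
    intro t ht u hu
    rw [hTmem] at ht hu
    obtain ⟨ht1, ht2⟩ := ht
    obtain ⟨hu1, hu2⟩ := hu
    have h1 : (⟨⟨t, ht1⟩, ht2⟩ : T₀) * ⟨⟨u, hu1⟩, hu2⟩ = ⟨⟨u, hu1⟩, hu2⟩ * ⟨⟨t, ht1⟩, ht2⟩ :=
      e.injective (by rw [map_mul, map_mul, mul_comm])
    have h2 := congrArg (fun z : T₀ => ((z : S) : G)) h1
    simpa using h2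
  have hTfin : ∀ c : ℕ, {t : G | t ∈ T ∧ t ^ p ^ c = 1}.Finite := by
    intro c
    apply Set.Finite.subset (Set.Finite.image
      (f := fun y : Multiplicative (DiscretePTorus p r) => (((e.symm y : T₀) : S) : G))
      (mtorus_torsion_finite p r c))
    rintro t ⟨ht, htc⟩
    rw [hTmem] at ht
    obtain ⟨ht1, ht2⟩ := ht
    set t₁ : T₀ := ⟨⟨t, ht1⟩, ht2⟩ with ht₁def
    have h1 : t₁ ^ p ^ c = 1 := by
      apply Subtype.ext; apply Subtype.ext
      show ((t₁ ^ p ^ c : T₀) : S).val = _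
      simpa using htc
    refine ⟨e t₁, ?_, by simp [ht₁def]⟩
    show (e t₁) ^ p ^ c = 1
    rw [← map_pow, h1, map_one]
  have hTdiv : ∀ t ∈ T, ∃ u ∈ T, u ^ p = t := by
    intro t ht
    rw [hTmem] at ht
    obtain ⟨ht1, ht2⟩ := ht
    set t₁ : T₀ := ⟨⟨t, ht1⟩, ht2⟩ with ht₁def
    obtain ⟨y, hy⟩ := mtorus_div p r (e t₁)
    refine ⟨((e.symm y : T₀) : S), ⟨(e.symm y : T₀), (e.symm y).2, rfl⟩, ?_⟩
    have h1 : (e.symm y) ^ p = t₁ := by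
      apply e.injective
      rw [map_pow]
      simp [hy]
    have h2 := congrArg (fun z : T₀ => ((z : S) : G)) h1
    simpa using h2
  -- a finite subgroup covering S modulo T
  have hH : ∃ H : Subgroup G, H ≤ S ∧ Finite H ∧ ∀ s ∈ S, ∃ x ∈ H, x⁻¹ * s ∈ T := by
    haveI : Finite (S ⧸ T₀) := T₀.finite_quotient_of_finiteIndex
    set H₀ : Subgroup S :=
      Subgroup.closure (Set.range (fun q : S ⧸ T₀ => (q.out : S))) with hH₀def
    haveI : Finite ↥(Set.range (fun q : S ⧸ T₀ => (q.out : S))) :=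
      (Set.finite_range _).to_subtype
    haveI : Group.FG H₀ := Group.closure_finite_fg _
    set K : Subgroup H₀ := T₀.subgroupOf H₀ with hKdef
    haveI hKfi : K.FiniteIndex := by
      constructor
      intro h0
      have hdvd : T₀.relIndex H₀ ∣ T₀.index := Subgroup.relIndex_dvd_index_of_normal T₀ H₀
      rw [Subgroup.relIndex] at hdvd
      rw [h0] at hdvd
      exact hT₀fi.index_ne_zero (zero_dvd_iff.mp hdvd)
    haveI : Group.FG K := Subgroup.fg_of_index_ne_zero K
    -- K is finite
    haveI hKfin : Finite K := by
      obtain ⟨W, hWclos, hWfin⟩ := (Group.fg_iff (G := K)).mp inferInstance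
      set cK : K → G := fun x => (((x : H₀) : S) : G) with hcKdef
      have hcKT : ∀ x : K, cK x ∈ T := by
        intro x
        exact ⟨(x : H₀), x.2, rfl⟩
      have hcKS : ∀ x : K, cK x ∈ S := fun x => hTS (hcKT x)
      have hcKmul : ∀ x y : K, cK (x * y) = cK x * cK y := fun x y => rfl
      have hcKinv : ∀ x : K, cK x⁻¹ = (cK x)⁻¹ := fun x => rfl
      have hcKord : ∀ x : K, ∃ c : ℕ, cK x ^ p ^ c = 1 := fun x => hSord _ (hcKS x)
      classical
      set f : K → ℕ := fun x => Classical.choose (hcKord x) with hfdef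
      set M : ℕ := hWfin.toFinset.sup f with hMdef
      have hpred : ∀ x : K, cK x ^ p ^ M = 1 := by
        intro x
        have hxtop : x ∈ Subgroup.closure W := by rw [hWclos]; trivial
        induction hxtop using Subgroup.closure_induction with
        | mem y hy =>
          have hfy : f y ≤ M := Finset.le_sup (hWfin.mem_toFinset.mpr hy)
          obtain ⟨d, hd⟩ := Nat.exists_eq_add_of_le hfy
          rw [hd, pow_add, pow_mul, Classical.choose_spec (hcKord y), one_pow]
        | one => rw [hcKdef]; simp
        | mul y z _ _ hy hz =>
          rw [hcKmul, Commute.mul_pow (hTcomm _ (hcKT y) _ (hcKT z)), hy, hz, one_mul]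
        | inv y _ hy => rw [hcKinv, inv_pow, hy, inv_one]
      haveI := (hTfin M).to_subtype
      apply Finite.of_injective (fun x : K =>
        (⟨cK x, hcKT x, hpred x⟩ : {t : G | t ∈ T ∧ t ^ p ^ M = 1}))
      intro x y hxy
      have h5 : cK x = cK y :=
        congrArg (fun z : {t : G | t ∈ T ∧ t ^ p ^ M = 1} => (z : G)) hxy
      exact Subtype.ext (Subtype.ext (Subtype.ext h5))
    haveI : Finite (H₀ ⧸ K) := K.finite_quotient_of_finiteIndex
    haveI : Finite H₀ :=
      Finite.of_equiv _ (Subgroup.groupEquivQuotientProdSubgroup (s := K)).symm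
    refine ⟨H₀.map S.subtype, Subgroup.map_subtype_le H₀, ?_, ?_⟩
    · have hfin : ((H₀.map S.subtype : Subgroup G) : Set G).Finite := by
        rw [Subgroup.coe_map]
        exact (Set.toFinite (H₀ : Set S)).image _
      exact hfin.to_subtype
    · intro s hs
      set q : S ⧸ T₀ := QuotientGroup.mk ⟨s, hs⟩ with hqdef
      have hout : (q.out : S) ∈ H₀ := Subgroup.subset_closure ⟨q, rfl⟩
      have heq : (QuotientGroup.mk q.out : S ⧸ T₀) = QuotientGroup.mk ⟨s, hs⟩ :=
        QuotientGroup.out_eq' q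
      have hmem : q.out⁻¹ * ⟨s, hs⟩ ∈ T₀ := QuotientGroup.eq.mp heq
      refine ⟨((q.out : S) : G), Subgroup.mem_map.mpr ⟨q.out, hout, rfl⟩, ?_⟩
      exact ⟨q.out⁻¹ * ⟨s, hs⟩, hmem, by simp⟩
  have hSP' : S ≤ P' :=
    key_lemma p n S T P' hTS hP'S hSord hTnorm hpow hTcomm hTfin hTdiv hH hP'fin
  intro Q hQ
  obtain ⟨h, hh⟩ := hSsyl Q hQ
  refine ⟨k⁻¹ * h, ?_⟩
  rw [hconj_le]
  intro x hx
  have h1 : h * x * h⁻¹ ∈ S := (hconj_le h Q S).mp hh x hx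
  have h2 : h * x * h⁻¹ ∈ P' := hSP' h1
  obtain ⟨y, hy, hy2⟩ := Subgroup.mem_map.mp h2
  have hy2' : k * y * k⁻¹ = h * x * h⁻¹ := by
    simpa [MulAut.conj_apply] using hy2
  have h3 : (k⁻¹ * h) * x * (k⁻¹ * h)⁻¹ = k⁻¹ * (h * x * h⁻¹) * k := by group
  rw [h3, ← hy2']
  have h4 : k⁻¹ * (k * y * k⁻¹) * k = y := by group
  rw [h4]
  exact hy
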